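/- arXiv:1310.3097 — 3 statements merged into one kernel-verified Lean document; each statement's English description precedes it below -/
import Mathlib

section
/- Let (X,d) be a complete metric space and S = (f_1,...,f_n) a GIFS of order m with attractor A. Define g : Ω → X by letting g(α) be the unique element of ⋂_{k∈ℕ} A_{α|_k}. Then g is continuous and g(Ω) = A. -/
open Filter Topology NNReal ENNReal

/-- The levels of the code space: `Ω_1 = {1,…,n}`, `Ω_{k+1} = (Ω_k)^m`
(here indexed from `0`). -/
def OmegaL (n m : ℕ) : ℕ → Type
  | 0 => Fin n
  | k + 1 => Fin m → OmegaL n m k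

/-- The code space `Ω = Π_k Ω_k`. -/
abbrev CodeSpace (n m : ℕ) : Type := ∀ k : ℕ, OmegaL n m k

instance OmegaL.decEq (n m : ℕ) : ∀ k, DecidableEq (OmegaL n m k)
  | 0 => inferInstanceAs (DecidableEq (Fin n))
  | k + 1 => letI := OmegaL.decEq n m k
             inferInstanceAs (DecidableEq (Fin m → OmegaL n m k))

instance OmegaL.fintype (n m : ℕ) : ∀ k, Fintype (OmegaL n m k)
  | 0 => inferInstanceAs (Fintype (Fin n))
  | k + 1 => letI := OmegaL.fintype n m k
             inferInstanceAs (Fintype (Fin m → OmegaL n m k))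

instance OmegaL.topologicalSpace (n m k : ℕ) : TopologicalSpace (OmegaL n m k) := ⊥

instance OmegaL.discreteTopology (n m k : ℕ) : DiscreteTopology (OmegaL n m k) := ⟨rfl⟩

/-- The metric `d(α,β) = Σ_k d_k(α^k,β^k)/(m+1)^{k+1}` on `Ω`,
where `d_k` is the 0-1 (discrete) metric on `Ω_k`. -/
noncomputable def codeDist {n m : ℕ} (α β : CodeSpace n m) : ℝ :=
  ∑' k : ℕ, (if α k = β k then 0 else 1) / (m + 1) ^ (k + 1)

/-- The shift maps `τ_j : Ω^m → Ω`,
`τ_j(α_1,…,α_m) = (j, (α_1^1,…,α_m^1), (α_1^2,…,α_m^2), …)`. -/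
def tau {n m : ℕ} (j : Fin n) (a : Fin m → CodeSpace n m) : CodeSpace n m :=
  fun k => match k with
  | 0 => j
  | k + 1 => fun i => a i k

/-- The iterated product spaces `X_1 = X^m`, `X_{k+1} = (X_k)^m`
(indexed from `0`). -/
def Xk (X : Type*) (m : ℕ) : ℕ → Type _
  | 0 => Fin m → X
  | k + 1 => Fin m → Xk X m k

/-- For a code `α = (α^1, α^2, …)`, the code `α(i) = (α^2_i, α^3_i, …)`. -/
def shiftCode {n m : ℕ} (α : CodeSpace n m) (i : Fin m) : CodeSpace n m :=
  fun k => (α (k + 1) : Fin m → OmegaL n m k) i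

/-- The maps `f_α : X_{k+1} → X` for `α` (a code restricted to its first `k+1`
symbols): `f_{(α^1)} = f_{α^1}` and
`f_α(x_1,…,x_m) = f_{α^1}(f_{α(1)}(x_1),…,f_{α(m)}(x_m))`. -/
def fA {X : Type*} {n m : ℕ} (f : Fin n → (Fin m → X) → X) :
    ∀ k : ℕ, CodeSpace n m → Xk X m k → X
  | 0, α, x => f (α 0) x
  | k + 1, α, x => f (α 0) (fun i => fA f k (shiftCode α i) ((x : Fin m → Xk X m k) i))

/-- The iterated products `K_1 = K^m`, `K_{k+1} = (K_k)^m` of a set `K ⊆ X`. -/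
def Spow {X : Type*} (m : ℕ) (K : Set X) : ∀ k : ℕ, Set (Xk X m k)
  | 0 => Set.univ.pi fun _ => K
  | k + 1 => (Set.univ.pi fun _ => Spow m K k : Set (Fin m → Xk X m k))

/-- The diagonal points `x^1 = x`, `x^{k+1} = (x^k,…,x^k)`. -/
def diag {X : Type*} {m : ℕ} (x : Fin m → X) : ∀ k : ℕ, Xk X m k
  | 0 => x
  | k + 1 => (fun _ => diag x k : Fin m → Xk X m k)

/-- Extending a code `α` (thought of as its first `k+1` symbols `α^1,…,α^{k+1}`)
by a new symbol `β ∈ Ω_{k+2}`: the concatenation `α ⌢ β`. -/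
def extendCode {n m : ℕ} (α : CodeSpace n m) (k : ℕ) (β : OmegaL n m (k + 1)) :
    CodeSpace n m :=
  fun j => if h : j = k + 1 then cast (congrArg (OmegaL n m) h.symm) β else α j

section Aux
lemma extendCode_apply_succ {n m : ℕ} (α : CodeSpace n m) (k : ℕ) (β : OmegaL n m (k+1)) :
    extendCode α k β (k+1) = β := by
  simp only [extendCode, dif_pos]
  exact eq_of_heq (cast_heq _ _)

lemma extendCode_apply_of_ne {n m : ℕ} (α : CodeSpace n m) {k j : ℕ} (h : j ≠ k+1)
    (β : OmegaL n m (k+1)) : extendCode α k β j = α j := dif_neg h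

lemma fA_congr {X : Type*} {n m : ℕ} (f : Fin n → (Fin m → X) → X) :
    ∀ k (α β : CodeSpace n m), (∀ j, j ≤ k → α j = β j) → fA f k α = fA f k β
  | 0, α, β, h => by funext x; simp only [fA, h 0 (le_refl 0)]
  | k+1, α, β, h => by
      funext x
      simp only [fA, h 0 (Nat.zero_le _)]
      congr 1
      funext i
      rw [fA_congr f k (shiftCode α i) (shiftCode β i)
        (fun j hj => by simp only [shiftCode]; rw [h (j+1) (Nat.succ_le_succ hj)])]

lemma fA_bound {X : Type*} [MetricSpace X] {n m : ℕ} (φ : ℝ≥0 → ℝ≥0) (hmono : Monotone φ)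
    (f : Fin n → (Fin m → X) → X)
    (hf : ∀ i, ∀ x y : Fin m → X, nndist (f i x) (f i y) ≤ φ (nndist x y))
    (A : Set X) (D : ℝ≥0) (hD : ∀ a ∈ A, ∀ b ∈ A, nndist a b ≤ D) :
    ∀ k (α : CodeSpace n m) (x y : Xk X m k), x ∈ Spow m A k → y ∈ Spow m A k →
      nndist (fA f k α x) (fA f k α y) ≤ φ^[k+1] D
  | 0, α, x, y, hx, hy => by
      show nndist (f (α 0) x) (f (α 0) y) ≤ φ^[0+1] D
      refine le_trans (hf (α 0) x y) ?_
      rw [Function.iterate_one]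
      exact hmono (nndist_pi_le_iff.2 fun i =>
        hD _ (hx i (Set.mem_univ i)) _ (hy i (Set.mem_univ i)))
  | k+1, α, x, y, hx, hy => by
      calc nndist (fA f (k+1) α x) (fA f (k+1) α y)
          ≤ φ (nndist (fun i => fA f k (shiftCode α i) ((x : Fin m → Xk X m k) i))
              (fun i => fA f k (shiftCode α i) ((y : Fin m → Xk X m k) i))) := hf _ _ _
        _ ≤ φ (φ^[k+1] D) := hmono (nndist_pi_le_iff.2 fun i =>
            fA_bound φ hmono f hf A D hD k (shiftCode α i) _ _
              (hx i (Set.mem_univ i)) (hy i (Set.mem_univ i)))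
        _ = φ^[k+1+1] D := (Function.iterate_succ_apply' φ (k+1) D).symm

lemma phi_zero (φ : ℝ≥0 → ℝ≥0) (hmono : Monotone φ)
    (hlt : ∀ t : ℝ≥0, 0 < t → φ t < t) : φ 0 = 0 := by
  by_contra h
  have hc : 0 < φ 0 := pos_iff_ne_zero.2 h
  exact absurd (hmono (zero_le : (0:ℝ≥0) ≤ φ 0)) (not_le.2 (hlt _ hc))

lemma iterate_tendsto (φ : ℝ≥0 → ℝ≥0) (hmono : Monotone φ) (husc : UpperSemicontinuous φ)
    (hlt : ∀ t : ℝ≥0, 0 < t → φ t < t) (D : ℝ≥0) :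
    Filter.Tendsto (fun k => φ^[k] D) Filter.atTop (nhds 0) := by
  have hle : ∀ t : ℝ≥0, φ t ≤ t := by
    intro t
    rcases eq_or_lt_of_le (zero_le : (0:ℝ≥0) ≤ t) with h | h
    · rw [← h, phi_zero φ hmono hlt]
    · exact (hlt t h).le
  have hanti : Antitone fun k => φ^[k] D := antitone_nat_of_succ_le fun k => by
    rw [Function.iterate_succ_apply' φ k D]; exact hle _
  have htend := tendsto_atTop_ciInf hanti (OrderBot.bddBelow _)
  set L := ⨅ k, φ^[k] D with hL
  have hLz : L = 0 := by
    by_contra hne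
    have hLpos : 0 < L := pos_iff_ne_zero.2 hne
    obtain ⟨y, hy1, hy2⟩ := exists_between (hlt L hLpos)
    have hev : ∀ᶠ z in nhds L, φ z < y := husc L y hy1
    have := (htend.eventually hev).exists
    obtain ⟨k, hk⟩ := this
    have : L ≤ φ^[k+1] D := ciInf_le (OrderBot.bddBelow _) (k+1)
    rw [Function.iterate_succ_apply' φ k D] at this
    exact absurd (lt_of_le_of_lt this hk) (not_lt.2 hy2.le)
  rw [hLz] at htend
  exact htend
def defOmega {n m : ℕ} (hn : 0 < n) : ∀ k, OmegaL n m k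
  | 0 => (⟨0, hn⟩ : Fin n)
  | k+1 => fun _ => defOmega hn k

lemma step_lemma {X : Type*} {n m : ℕ} (f : Fin n → (Fin m → X) → X) (A : Set X)
    (hAfix : (⋃ i, f i '' Set.univ.pi fun _ => A) = A) :
    ∀ (k : ℕ) (α : CodeSpace n m) (a : X), a ∈ fA f k α '' Spow m A k →
      ∃ β : OmegaL n m (k+1), a ∈ fA f (k+1) (extendCode α k β) '' Spow m A (k+1)
  | 0, α, a, ha => by
      obtain ⟨x, hx, rfl⟩ := ha
      have h1 : ∀ i : Fin m, ∃ (j : Fin n) (y : Fin m → X), (∀ l, y l ∈ A) ∧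
          f j y = (x : Fin m → X) i := by
        intro i
        have hxi : (x : Fin m → X) i ∈ A := hx i (Set.mem_univ i)
        rw [← hAfix] at hxi
        obtain ⟨_, ⟨j, rfl⟩, y, hy, hyx⟩ := hxi
        exact ⟨j, y, fun l => hy l (Set.mem_univ l), hyx⟩
      choose j y hy hyx using h1
      refine ⟨j, y, fun i _ l _ => hy i l, ?_⟩
      have e0 : extendCode α 0 j 0 = α 0 := extendCode_apply_of_ne α (k := 0) (j := 0) (by omega) j
      calc fA f 1 (extendCode α 0 j) y
          = f (α 0) (fun i => f (j i) (y i)) := by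
            show f (extendCode α 0 j 0) _ = _
            rw [e0]
            congr 1
        _ = f (α 0) x := by congr 1; funext i; rw [hyx i]
        _ = fA f 0 α x := rfl
  | k+1, α, a, ha => by
      obtain ⟨x, hx, rfl⟩ := ha
      have h1 : ∀ i : Fin m, ∃ (β : OmegaL n m (k+1)) (z : Xk X m (k+1)),
          z ∈ Spow m A (k+1) ∧
          fA f (k+1) (extendCode (shiftCode α i) k β) z
            = fA f k (shiftCode α i) ((x : Fin m → Xk X m k) i) := by
        intro i
        obtain ⟨β, z, hz, hze⟩ := step_lemma f A hAfix k (shiftCode α i) _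
          ⟨(x : Fin m → Xk X m k) i, hx i (Set.mem_univ i), rfl⟩
        exact ⟨β, z, hz, hze⟩
      choose β z hz hze using h1
      refine ⟨β, z, fun i _ => hz i, ?_⟩
      have e0 : extendCode α (k+1) β 0 = α 0 := extendCode_apply_of_ne α (k := k+1) (j := 0) (by omega) β
      have ekey : ∀ i, fA f (k+1) (shiftCode (extendCode α (k+1) β) i)
          = fA f (k+1) (extendCode (shiftCode α i) k (β i)) := by
        intro i
        apply fA_congr
        intro jj hj
        by_cases hjk : jj = k+1
        · subst hjk
          rw [extendCode_apply_succ]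
          show extendCode α (k+1) β (k+1+1) i = β i
          exact congrFun (extendCode_apply_succ α (k+1) β) i
        · rw [extendCode_apply_of_ne _ hjk]
          show extendCode α (k+1) β (jj+1) i = shiftCode α i jj
          rw [extendCode_apply_of_ne α (k := k+1) (j := jj+1) (by omega) β]
          rfl
      calc fA f (k+1+1) (extendCode α (k+1) β) z
          = f (α 0) (fun i => fA f (k+1) (extendCode (shiftCode α i) k (β i)) (z i)) := by
            show f (extendCode α (k+1) β 0) _ = _
            rw [e0]
            congr 1; funext i
            rw [ekey i]
        _ = f (α 0) (fun i => fA f k (shiftCode α i) ((x : Fin m → Xk X m k) i)) := by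
            congr 1; funext i; rw [hze i]
        _ = fA f (k+1) α x := rfl

end Aux

/-- The coding map `g : Ω → X`, sending `α` to the unique point of
`⋂_k A_{α|_k}`, is continuous and `g(Ω) = A`. -/
theorem coding_map_continuous_surjective
    {X : Type*} [MetricSpace X] [CompleteSpace X]
    {n m : ℕ} (hn : 0 < n) (hm : 0 < m)
    (φ : ℝ≥0 → ℝ≥0)
    (hmono : Monotone φ) (husc : UpperSemicontinuous φ)
    (hlt : ∀ t : ℝ≥0, 0 < t → φ t < t)
    (f : Fin n → (Fin m → X) → X)
    (hf : ∀ i, ∀ x y : Fin m → X, nndist (f i x) (f i y) ≤ φ (nndist x y))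
    (A : Set X) (hAne : A.Nonempty) (hAc : IsCompact A)
    (hAfix : (⋃ i, f i '' Set.univ.pi fun _ => A) = A)
    (g : CodeSpace n m → X)
    (hg : ∀ α : CodeSpace n m, (⋂ k : ℕ, fA f k α '' Spow m A k) = {g α}) :
    Continuous g ∧ Set.range g = A := by
  have hle : ∀ t : ℝ≥0, φ t ≤ t := by
    intro t
    rcases eq_or_lt_of_le (zero_le : (0:ℝ≥0) ≤ t) with h | h
    · rw [← h, phi_zero φ hmono hlt]
    · exact (hlt t h).le
  obtain ⟨C, hC⟩ := Metric.isBounded_iff.1 hAc.isBounded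
  set D : ℝ≥0 := Real.toNNReal C with hDdef
  have hD : ∀ a ∈ A, ∀ b ∈ A, nndist a b ≤ D := by
    intro a ha b hb
    rw [← NNReal.coe_le_coe, coe_nndist, hDdef, Real.coe_toNNReal']
    exact le_max_of_le_left (hC ha hb)
  have hmemg : ∀ (α : CodeSpace n m) (k : ℕ), g α ∈ fA f k α '' Spow m A k := by
    intro α k
    have h1 : g α ∈ ({g α} : Set X) := rfl
    rw [← hg α] at h1
    exact Set.mem_iInter.1 h1 k
  have hcont : Continuous g := by
    rw [continuous_iff_continuousAt]
    intro α
    rw [ContinuousAt, Metric.tendsto_nhds]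
    intro ε hε
    have htd := iterate_tendsto φ hmono husc hlt D
    have hev : ∀ᶠ k in Filter.atTop, φ^[k] D < Real.toNNReal ε :=
      htd.eventually (gt_mem_nhds (Real.toNNReal_pos.2 hε))
    obtain ⟨N, hN⟩ := hev.exists
    have hU : {β : CodeSpace n m | ∀ j ≤ N, β j = α j} ∈ 𝓝 α := by
      have hopen : IsOpen {β : CodeSpace n m | ∀ j ≤ N, β j = α j} := by
        have heq : {β : CodeSpace n m | ∀ j ≤ N, β j = α j}
            = ⋂ j ∈ Finset.range (N+1), (fun β : CodeSpace n m => β j) ⁻¹' {α j} := by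
          ext β; simp [Nat.lt_succ_iff]
        rw [heq]
        exact isOpen_biInter_finset fun j _ =>
          (isOpen_discrete _).preimage (continuous_apply j)
      exact hopen.mem_nhds (fun j _ => rfl)
    filter_upwards [hU] with β hβ
    obtain ⟨x, hx, hgx⟩ := hmemg β N
    obtain ⟨y, hy, hgy⟩ := hmemg α N
    have hfab : fA f N β = fA f N α := fA_congr f N β α (fun j hj => hβ j hj)
    have hb : nndist (g β) (g α) ≤ φ^[N+1] D := by
      rw [← hgx, ← hgy, hfab]
      exact fA_bound φ hmono f hf A D hD N α x y hx hy
    have hb2 : φ^[N+1] D < Real.toNNReal ε := by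
      rw [Function.iterate_succ_apply']
      exact lt_of_le_of_lt (hle _) hN
    rw [dist_nndist]
    calc (nndist (g β) (g α) : ℝ) ≤ ((φ^[N+1] D : ℝ≥0) : ℝ) := by exact_mod_cast hb
      _ < ((Real.toNNReal ε : ℝ≥0) : ℝ) := by exact_mod_cast hb2
      _ ≤ ε := by rw [Real.coe_toNNReal ε hε.le]
  refine ⟨hcont, Set.Subset.antisymm ?_ ?_⟩
  · rintro _ ⟨α, rfl⟩
    obtain ⟨x, hx, hgx⟩ := hmemg α 0
    rw [← hAfix]
    exact Set.mem_iUnion.2 ⟨α 0, x, hx, hgx⟩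
  · intro a ha
    have h0 : ∃ γ : CodeSpace n m, a ∈ fA f 0 γ '' Spow m A 0 := by
      rw [← hAfix] at ha
      obtain ⟨_, ⟨i, rfl⟩, x, hx, hxa⟩ := ha
      exact ⟨fun k => match k with | 0 => i | k+1 => defOmega hn (k+1), x, hx, hxa⟩
    let seq : ∀ k : ℕ, { γ : CodeSpace n m // a ∈ fA f k γ '' Spow m A k } := fun k =>
      Nat.rec ⟨h0.choose, h0.choose_spec⟩
        (fun k ih => ⟨extendCode ih.1 k (step_lemma f A hAfix k ih.1 a ih.2).choose,
          (step_lemma f A hAfix k ih.1 a ih.2).choose_spec⟩) k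
    have hseq_succ : ∀ k j, j ≤ k → (seq (k+1)).1 j = (seq k).1 j := by
      intro k j hj
      show extendCode (seq k).1 k _ j = (seq k).1 j
      exact extendCode_apply_of_ne _ (by omega) _
    have hagree : ∀ j k, j ≤ k → (seq k).1 j = (seq j).1 j := by
      intro j k
      induction k with
      | zero => intro hjk; have h : j = 0 := Nat.le_zero.1 hjk; subst h; rfl
      | succ k ih =>
        intro hjk
        rcases Nat.lt_or_ge j (k+1) with h | h
        · rw [hseq_succ k j (Nat.lt_succ_iff.1 h)]
          exact ih (Nat.lt_succ_iff.1 h)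
        · have h2 : j = k+1 := le_antisymm hjk h
          subst h2; rfl
    refine ⟨fun j => (seq j).1 j, ?_⟩
    have hmem : ∀ k, a ∈ fA f k (fun j => (seq j).1 j) '' Spow m A k := by
      intro k
      have he : fA f k (fun j => (seq j).1 j) = fA f k (seq k).1 :=
        fA_congr f k _ (seq k).1 (fun j hj => (hagree j k hj).symm)
      rw [he]; exact (seq k).2
    have hin : a ∈ ⋂ k, fA f k (fun j => (seq j).1 j) '' Spow m A k := Set.mem_iInter.2 hmem
    rw [hg _] at hin
    exact (Set.mem_singleton_iff.1 hin).symm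
end

section
/- Let (X,d) be a complete metric space and S = (f_1,...,f_n) a GIFS of order m with address map g : Ω → X. For every x = (x_1,...,x_m) ∈ X^m and every α ∈ Ω, the sequence (f_{α|_k}(x^k))_k converges to g(α), where x^1 = x and x^{k+1} = (x^k,...,x^k) (m copies). In particular the limit does not depend on x. -/
open Filter Topology NNReal ENNReal

noncomputable instance XkMS {X : Type*} [MetricSpace X] {m : ℕ} : ∀ k, MetricSpace (Xk X m k)
  | 0 => inferInstanceAs (MetricSpace (Fin m → X))
  | k + 1 => @metricSpacePi (Fin m) (fun _ => Xk X m k) _ (fun _ => XkMS (X := X) (m := m) k)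

lemma fA_contract {X : Type*} [MetricSpace X] {n m : ℕ}
    {φ : ℝ≥0 → ℝ≥0} (hmono : Monotone φ)
    (f : Fin n → (Fin m → X) → X)
    (hf : ∀ i, ∀ x y : Fin m → X, nndist (f i x) (f i y) ≤ φ (nndist x y)) :
    ∀ (k : ℕ) (α : CodeSpace n m) (u v : Xk X m k),
      nndist (fA f k α u) (fA f k α v) ≤ φ^[k + 1] (nndist u v)
  | 0, α, u, v => by exact hf (α 0) u v
  | k + 1, α, u, v => by
    have h1 : nndist (fun i => fA f k (shiftCode α i) ((u : Fin m → Xk X m k) i))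
        (fun i => fA f k (shiftCode α i) ((v : Fin m → Xk X m k) i))
        ≤ φ^[k + 1] (nndist u v) := by
      rw [nndist_pi_le_iff]
      intro i
      exact le_trans (fA_contract hmono f hf k (shiftCode α i) _ _)
        (hmono.iterate (k + 1) (nndist_le_pi_nndist
          (u : Fin m → Xk X m k) (v : Fin m → Xk X m k) i))
    calc nndist (fA f (k + 1) α u) (fA f (k + 1) α v)
        ≤ φ (nndist (fun i => fA f k (shiftCode α i) ((u : Fin m → Xk X m k) i))
            (fun i => fA f k (shiftCode α i) ((v : Fin m → Xk X m k) i))) := hf (α 0) _ _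
      _ ≤ φ (φ^[k + 1] (nndist u v)) := hmono h1
      _ = φ^[k + 2] (nndist u v) := (Function.iterate_succ_apply' φ (k + 1) _).symm

lemma phi_iterate_tendsto_zero {φ : ℝ≥0 → ℝ≥0} (hmono : Monotone φ)
    (husc : UpperSemicontinuous φ) (hlt : ∀ t : ℝ≥0, 0 < t → φ t < t) (C : ℝ≥0) :
    Tendsto (fun k : ℕ => φ^[k] C) atTop (𝓝 0) := by
  have hle : ∀ t, φ t ≤ t := by
    intro t
    rcases eq_or_lt_of_le (zero_le : 0 ≤ t) with h | h
    · rw [← h]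
      by_contra hc
      push_neg at hc
      exact absurd (hmono (zero_le : 0 ≤ φ 0)) (not_le.mpr (hlt _ hc))
    · exact (hlt t h).le
  have hanti : Antitone fun k : ℕ => φ^[k] C := by
    apply antitone_nat_of_succ_le
    intro k
    rw [Function.iterate_succ_apply']
    exact hle _
  set L := ⨅ k : ℕ, φ^[k] C with hL
  have htend : Tendsto (fun k : ℕ => φ^[k] C) atTop (𝓝 L) :=
    tendsto_atTop_ciInf hanti (OrderBot.bddBelow _)
  have hL0 : L = 0 := by
    by_contra hc
    have hLpos : 0 < L := pos_iff_ne_zero.mpr hc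
    obtain ⟨y, hy1, hy2⟩ := exists_between (hlt L hLpos)
    have hev : ∀ᶠ s in 𝓝 L, φ s < y := husc L y hy1
    obtain ⟨k, hk⟩ := (htend.eventually hev).exists
    have : L ≤ φ^[k + 1] C := ciInf_le (OrderBot.bddBelow _) (k + 1)
    rw [Function.iterate_succ_apply'] at this
    exact absurd (this.trans_lt hk) (not_lt.mpr hy2.le)
  rwa [hL0] at htend

lemma diag_nndist_bound {X : Type*} [MetricSpace X] {m : ℕ}
    {A : Set X} {x : Fin m → X} {C : ℝ≥0}
    (hC : ∀ i, ∀ a ∈ A, nndist (x i) a ≤ C) :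
    ∀ (k : ℕ) (y : Xk X m k), y ∈ Spow m A k → nndist (diag x k) y ≤ C := by
  intro k
  induction k with
  | zero =>
    intro y hy
    rw [show diag x 0 = x from rfl]
    refine (nndist_pi_le_iff (f := x) (g := (y : Fin m → X))).mpr ?_
    intro i
    exact hC i (y i) (hy i trivial)
  | succ k ih =>
    intro y hy
    show nndist (fun _ => diag x k : Fin m → Xk X m k) y ≤ C
    refine (nndist_pi_le_iff (f := (fun _ => diag x k : Fin m → Xk X m k)) (g := (y : Fin m → Xk X m k))).mpr ?_
    intro i
    exact ih ((y : Fin m → Xk X m k) i) (hy i trivial)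

/-- For every `x = (x_1,…,x_m) ∈ X^m` and every `α ∈ Ω`, the
sequence `f_{α|_k}(x^k)` (with `x^1 = x`, `x^{k+1} = (x^k,…,x^k)`) converges to
`g α`; in particular the limit does not depend on `x`. -/
theorem code_iterates_tendsto
    {X : Type*} [MetricSpace X] [CompleteSpace X]
    {n m : ℕ} (hn : 0 < n) (hm : 0 < m)
    (φ : ℝ≥0 → ℝ≥0)
    (hmono : Monotone φ) (husc : UpperSemicontinuous φ)
    (hlt : ∀ t : ℝ≥0, 0 < t → φ t < t)
    (f : Fin n → (Fin m → X) → X)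
    (hf : ∀ i, ∀ x y : Fin m → X, nndist (f i x) (f i y) ≤ φ (nndist x y))
    (A : Set X) (hAne : A.Nonempty) (hAc : IsCompact A)
    (hAfix : (⋃ i, f i '' Set.univ.pi fun _ => A) = A)
    (g : CodeSpace n m → X)
    (hg : ∀ α : CodeSpace n m, (⋂ k : ℕ, fA f k α '' Spow m A k) = {g α})
    (x : Fin m → X) (α : CodeSpace n m) :
    Tendsto (fun k : ℕ => fA f k α (diag x k)) atTop (𝓝 (g α)) := by
  -- get a uniform bound C
  obtain ⟨C, hC⟩ : ∃ C : ℝ≥0, ∀ i, ∀ a ∈ A, nndist (x i) a ≤ C := by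
    have hB : Bornology.IsBounded (A ∪ Set.range x) :=
      hAc.isBounded.union (Set.finite_range x).isBounded
    obtain ⟨C, hC⟩ := Metric.isBounded_iff.mp hB
    refine ⟨C.toNNReal, fun i a ha => ?_⟩
    have := hC (Or.inr ⟨i, rfl⟩) (Or.inl ha)
    rw [nndist_dist]
    exact Real.toNNReal_le_toNNReal this
  have key : ∀ k : ℕ, nndist (fA f k α (diag x k)) (g α) ≤ φ^[k + 1] C := by
    intro k
    have hmem : g α ∈ fA f k α '' Spow m A k :=
      Set.mem_iInter.mp ((hg α).symm ▸ Set.mem_singleton (g α)) k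
    obtain ⟨y, hy, hfy⟩ := hmem
    calc nndist (fA f k α (diag x k)) (g α)
        = nndist (fA f k α (diag x k)) (fA f k α y) := by rw [hfy]
      _ ≤ φ^[k + 1] (nndist (diag x k) y) := fA_contract hmono f hf k α _ _
      _ ≤ φ^[k + 1] C := hmono.iterate (k + 1) (diag_nndist_bound hC k y hy)
  have h0 : Tendsto (fun k : ℕ => φ^[k + 1] C) atTop (𝓝 0) :=
    (phi_iterate_tendsto_zero hmono husc hlt C).comp (tendsto_add_atTop_nat 1)
  have hnn : Tendsto (fun k : ℕ => nndist (fA f k α (diag x k)) (g α)) atTop (𝓝 0) :=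
    tendsto_of_tendsto_of_tendsto_of_le_of_le tendsto_const_nhds h0
      (fun k => zero_le) key
  rw [tendsto_iff_dist_tendsto_zero]
  have h2 : Tendsto (fun k : ℕ => (nndist (fA f k α (diag x k)) (g α) : ℝ))
      atTop (𝓝 ((0 : ℝ≥0) : ℝ)) := NNReal.tendsto_coe.mpr hnn
  rw [NNReal.coe_zero] at h2
  exact h2.congr fun k => coe_nndist _ _
end

section
/- Let X be a Hausdorff topological space and S = (f_1,...,f_n) a topological GIFS of order m. If H, D ∈ 𝒦(X) satisfy F_S(H,...,H) ⊂ H and F_S(D,...,D) ⊂ D, then for every α ∈ Ω, ⋂_{k∈ℕ} f_{α|_k}(H_k) = ⋂_{k∈ℕ} f_{α|_k}(D_k). -/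
open Filter Topology NNReal

lemma Spow_mono {X : Type*} (m : ℕ) {A B : Set X} (h : A ⊆ B) :
    ∀ k, Spow m A k ⊆ Spow m B k
  | 0 => fun x hx i hi => h (hx i hi)
  | k + 1 => fun x hx i hi => Spow_mono m h k (hx i hi)

/-- For a topological GIFS `(f_1,…,f_n)` on a Hausdorff space: if
`H, D` are nonempty compact sets with `F_S(H,…,H) ⊆ H` and `F_S(D,…,D) ⊆ D`, then for
every code `α ∈ Ω`, `⋂_k f_{α|_k}(H_k) = ⋂_k f_{α|_k}(D_k)`. -/
theorem tgifs_inter_independent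
    {X : Type*} [TopologicalSpace X] [T2Space X]
    {n m : ℕ} (hn : 0 < n) (hm : 0 < m)
    (f : Fin n → (Fin m → X) → X)
    (hcont : ∀ i, Continuous (f i))
    -- condition (i) of a TGIFS
    (h1 : ∀ K : Set X, IsCompact K → K.Nonempty →
      ∃ H : Set X, IsCompact H ∧ H.Nonempty ∧ K ⊆ H ∧
        (⋃ i, f i '' Set.univ.pi fun _ => H) ⊆ H)
    -- condition (ii) of a TGIFS
    (h2 : ∀ H : Set X, IsCompact H → H.Nonempty →
      (⋃ i, f i '' Set.univ.pi fun _ => H) ⊆ H →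
      ∀ α : CodeSpace n m, ∃ x : X, (⋂ k : ℕ, fA f k α '' Spow m H k) = {x})
    (H D : Set X) (hHc : IsCompact H) (hHne : H.Nonempty)
    (hDc : IsCompact D) (hDne : D.Nonempty)
    (hH : (⋃ i, f i '' Set.univ.pi fun _ => H) ⊆ H)
    (hD : (⋃ i, f i '' Set.univ.pi fun _ => D) ⊆ D)
    (α : CodeSpace n m) :
    (⋂ k : ℕ, fA f k α '' Spow m H k) = ⋂ k : ℕ, fA f k α '' Spow m D k := by
  obtain ⟨H', hH'c, hH'ne, hsub, hH'inv⟩ := h1 (H ∪ D) (hHc.union hDc) (hHne.mono Set.subset_union_left)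
  obtain ⟨x, hx⟩ := h2 H' hH'c hH'ne hH'inv α
  obtain ⟨xH, hxH⟩ := h2 H hHc hHne hH α
  obtain ⟨xD, hxD⟩ := h2 D hDc hDne hD α
  have key : ∀ (A : Set X), A ⊆ H' → (⋂ k : ℕ, fA f k α '' Spow m A k) ⊆ {x} := by
    intro A hA
    rw [← hx]
    exact Set.iInter_mono fun k => Set.image_mono (Spow_mono m hA k)
  have h1' : xH = x := key H (hsub.trans' Set.subset_union_left) (hxH ▸ rfl)
  have h2' : xD = x := key D (hsub.trans' Set.subset_union_right) (hxD ▸ rfl)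
  rw [hxH, hxD, h1', h2']
end
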